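/- For any vector y ∈ ℝ^m there exists at most one k-sparse vector x ∈ ℝ^n with y = Gx if and only if spark(G) > 2k. -/

import Mathlib

open Matrix Finset

def IsSparseR {ι : Type*} (k : ℕ) (v : ι → ℝ) : Prop :=
  ∃ s : Finset ι, s.card ≤ k ∧ ∀ i ∉ s, v i = 0

/-- Every set of at most `k` columns of the real matrix `M` is linearly independent,
    i.e. spark(M) > k. -/
def SparkGtR {m n : Type*} [Fintype m] [Fintype n]
    (M : Matrix m n ℝ) (k : ℕ) : Prop :=
  ∀ s : Finset n, s.card ≤ k → LinearIndependent ℝ (fun j : s => fun i : m => M i (j : n))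

lemma sparkAux {m n : ℕ} (G : Matrix (Fin m) (Fin n) ℝ) (s : Finset (Fin n)) :
    LinearIndependent ℝ (fun j : s => fun i : Fin m => G i (j : Fin n)) ↔
    ∀ v : Fin n → ℝ, (∀ j ∉ s, v j = 0) → G.mulVec v = 0 → v = 0 := by
  rw [Fintype.linearIndependent_iff]
  constructor
  · intro H v hv hGv
    funext j
    by_cases hj : j ∈ s
    · refine H (fun j => v j) ?_ ⟨j, hj⟩
      funext i
      have h1 := congrFun hGv i
      simp only [Matrix.mulVec, dotProduct, Pi.zero_apply] at h1
      simp only [Finset.sum_apply, Pi.smul_apply, smul_eq_mul, Pi.zero_apply]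
      calc (∑ x : s, v x * G i x) = ∑ x ∈ s, v x * G i x :=
            Finset.sum_coe_sort s (fun j => v j * G i j)
        _ = ∑ x : Fin n, G i x * v x := by
            rw [← Finset.sum_subset (Finset.subset_univ s)
              (fun x _ hx => by simp [hv x hx])]
            exact Finset.sum_congr rfl (fun x _ => mul_comm _ _)
        _ = 0 := h1
    · exact hv j hj
  · intro H g hg j
    set v : Fin n → ℝ := fun j => if h : j ∈ s then g ⟨j, h⟩ else 0 with hvdef
    have hv0 : v = 0 := by
      refine H v (fun j hj => by simp [hvdef, hj]) ?_
      funext i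
      have h1 := congrFun hg i
      simp only [Finset.sum_apply, Pi.smul_apply, smul_eq_mul, Pi.zero_apply] at h1
      simp only [Matrix.mulVec, dotProduct, Pi.zero_apply]
      calc (∑ x : Fin n, G i x * v x) = ∑ x ∈ s, G i x * v x :=
            (Finset.sum_subset (Finset.subset_univ s)
              (fun x _ hx => by simp [hvdef, hx])).symm
        _ = ∑ x : s, G i x * v x := (Finset.sum_coe_sort s (fun j => G i j * v j)).symm
        _ = ∑ x : s, g x * G i x := by
            refine Finset.sum_congr rfl fun x _ => ?_
            simp [hvdef, x.2, mul_comm]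
        _ = 0 := h1
    have := congrFun hv0 j
    simpa [hvdef, j.2] using this

/-- uniqueness of k-sparse solutions for every y holds iff spark(G) > 2k. -/
theorem unique_sparse_solution_iff_spark
    (m n k : ℕ) (hk : k ≤ n) (G : Matrix (Fin m) (Fin n) ℝ) :
    (∀ y : Fin m → ℝ, ∀ x₁ x₂ : Fin n → ℝ,
      IsSparseR k x₁ → IsSparseR k x₂ →
      G.mulVec x₁ = y → G.mulVec x₂ = y → x₁ = x₂) ↔
    SparkGtR G (2 * k) := by
  constructor
  · intro h s hs
    rw [sparkAux]
    intro v hv hGv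
    obtain ⟨s₁, hs₁sub, hs₁card⟩ :=
      Finset.exists_subset_card_eq (s := s) (n := min k s.card) (min_le_right _ _)
    set s₂ := s \ s₁ with hs₂def
    have hc₂ : s₂.card ≤ k := by
      rw [hs₂def, Finset.card_sdiff_of_subset hs₁sub, hs₁card]
      omega
    set x₁ : Fin n → ℝ := fun j => if j ∈ s₁ then v j else 0 with hx₁def
    set x₂ : Fin n → ℝ := fun j => x₁ j - v j with hx₂def
    have hsp₁ : IsSparseR k x₁ :=
      ⟨s₁, by omega, fun j hj => by simp [hx₁def, hj]⟩
    have hsp₂ : IsSparseR k x₂ := by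
      refine ⟨s₂, hc₂, fun j hj => ?_⟩
      by_cases hjs : j ∈ s
      · have hj₁ : j ∈ s₁ := by
          rw [hs₂def] at hj; simp [hjs] at hj; exact hj
        simp [hx₂def, hx₁def, hj₁]
      · have : v j = 0 := hv j hjs
        have hj₁ : j ∉ s₁ := fun hc => hjs (hs₁sub hc)
        simp [hx₂def, hx₁def, hj₁, this]
    have hmv : G.mulVec x₂ = G.mulVec x₁ := by
      have : x₂ = x₁ - v := by funext j; simp [hx₂def]
      rw [this, Matrix.mulVec_sub, hGv, sub_zero]
    have heq := h (G.mulVec x₁) x₁ x₂ hsp₁ hsp₂ rfl hmv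
    funext j
    have := congrFun heq j
    simp only [hx₂def] at this
    have : v j = 0 := by linarith [this]
    simpa using this
  · intro hsp y x₁ x₂ ⟨s₁, hc₁, h₁⟩ ⟨s₂, hc₂, h₂⟩ hg₁ hg₂
    have hcard : (s₁ ∪ s₂).card ≤ 2 * k := by
      have := Finset.card_union_le s₁ s₂
      omega
    have key := (sparkAux G (s₁ ∪ s₂)).mp (hsp (s₁ ∪ s₂) hcard)
    have hz : x₁ - x₂ = 0 := by
      refine key (x₁ - x₂) (fun j hj => ?_) ?_
      · simp only [Finset.mem_union, not_or] at hj
        simp [h₁ j hj.1, h₂ j hj.2]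
      · rw [Matrix.mulVec_sub, hg₁, hg₂, sub_self]
    exact sub_eq_zero.mp hz
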